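/- Let S be a nonabelian finite simple group and let c, m be positive integers with m ≤ |Aut(S)|^c. Then there exist c + 1 injective homomorphisms f_1, …, f_{c+1} : S → S^m such that S^m = ⟨f_1(S), …, f_{c+1}(S)⟩. -/

import Mathlib

section Aux

variable {S : Type} [Group S]

/-- A surjective homomorphism from a finite power of a nonabelian simple group `S`
onto `S` kills everything vanishing at some fixed coordinate. -/
lemma factor_lemma (hS : IsSimpleGroup S)
    (hna : ∃ a b : S, a * b ≠ b * a)
    {n : ℕ} (φ : (Fin n → S) →* S) (hφ : Function.Surjective φ) :
    ∃ i₀ : Fin n, ∀ x : Fin n → S, x i₀ = 1 → φ x = 1 := by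
  classical
  set ψ : Fin n → (S →* S) := fun i => φ.comp (MonoidHom.mulSingle (fun _ => S) i) with hψdef
  have hker : ∀ i, (ψ i).ker = ⊥ ∨ (ψ i).ker = ⊤ := fun i =>
    hS.eq_bot_or_eq_top_of_normal _ ((ψ i).normal_ker)
  have hconj : ∀ (y : Fin n → S) (i : Fin n) (s : S),
      y * Pi.mulSingle i s * y⁻¹ = Pi.mulSingle i (y i * s * (y i)⁻¹) := by
    intro y i s
    funext j
    rcases eq_or_ne j i with rfl | hj
    · simp
    · simp [Pi.mulSingle_eq_of_ne hj]
  have key : ∀ x : Fin n → S, (∀ i, ψ i (x i) = 1) → φ x = 1 := by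
    intro x hx
    rw [← Finset.noncommProd_mulSingle x]
    refine (Finset.univ.map_noncommProd _ _ φ).trans ?_
    refine (Finset.noncommProd_eq_pow_card _ _ _ 1 ?_).trans (one_pow _)
    intro i _
    exact hx i
  by_cases htriv : ∀ i, (ψ i).ker = ⊤
  · exfalso
    have hφ1 : ∀ x, φ x = 1 := by
      intro x
      apply key
      intro i
      have hx : x i ∈ (ψ i).ker := by rw [htriv i]; trivial
      exact hx
    obtain ⟨s, hs⟩ := exists_ne (1 : S)
    obtain ⟨x, hx⟩ := hφ s
    exact hs (hx ▸ hφ1 x)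
  · push_neg at htriv
    obtain ⟨i₀, hi₀⟩ := htriv
    have hrest : ∀ i, i ≠ i₀ → (ψ i).ker = ⊤ := by
      intro i hi
      by_contra hk
      have hki : (ψ i).ker = ⊥ := (hker i).resolve_right hk
      have hki₀ : (ψ i₀).ker = ⊥ := (hker i₀).resolve_right hi₀
      have hrange : ∀ j, ((ψ j).range).Normal := by
        intro j
        constructor
        intro x hx g
        obtain ⟨s, rfl⟩ := hx
        obtain ⟨y, rfl⟩ := hφ g
        refine ⟨y j * s * (y j)⁻¹, ?_⟩
        have h1 : ψ j (y j * s * (y j)⁻¹) = φ (y * Pi.mulSingle j s * y⁻¹) := by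
          rw [hconj]; rfl
        rw [h1, map_mul, map_mul, map_inv]; rfl
      have hrtop : ∀ j, (ψ j).ker = ⊥ → (ψ j).range = ⊤ := by
        intro j hk
        rcases hS.eq_bot_or_eq_top_of_normal _ (hrange j) with h | h
        · exfalso
          obtain ⟨s, hs⟩ := exists_ne (1 : S)
          have h1 : ψ j s ∈ (ψ j).range := ⟨s, rfl⟩
          rw [h, Subgroup.mem_bot] at h1
          have : s ∈ (ψ j).ker := h1
          rw [hk, Subgroup.mem_bot] at this
          exact hs this
        · exact h
      obtain ⟨a, b, hab⟩ := hna
      have ha : a ∈ (ψ i).range := by rw [hrtop i hki]; trivial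
      have hb : b ∈ (ψ i₀).range := by rw [hrtop i₀ hki₀]; trivial
      obtain ⟨u, hu⟩ := ha
      obtain ⟨v, hv⟩ := hb
      have hc := Pi.mulSingle_commute (f := fun _ : Fin n => S) hi u v
      have : Commute a b := by
        rw [← hu, ← hv]
        exact hc.map φ
      exact hab this
    refine ⟨i₀, ?_⟩
    intro x hx
    apply key
    intro i
    rcases eq_or_ne i i₀ with rfl | hi
    · rw [hx, map_one]
    · have hxk : x i ∈ (ψ i).ker := by rw [hrest i hi]; trivial
      exact hxk

/-- A subgroup of `S × S` containing the diagonal and a nontrivial element of `1 × S`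
is everything. -/
lemma prod_top (hS : IsSimpleGroup S) (P : Subgroup (S × S))
    (hdiag : ∀ u : S, (u, u) ∈ P) {w : S} (hw : w ≠ 1) (hmem : ((1 : S), w) ∈ P) :
    P = ⊤ := by
  set K : Subgroup S := P.comap (MonoidHom.inr S S) with hK
  have hKnormal : K.Normal := by
    constructor
    intro s hs g
    have h1 : ((g, g) : S × S) * (1, s) * (g, g)⁻¹ ∈ P :=
      P.mul_mem (P.mul_mem (hdiag g) hs) (P.inv_mem (hdiag g))
    have h2 : ((g, g) : S × S) * (1, s) * (g, g)⁻¹ = (1, g * s * g⁻¹) := by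
      simp [Prod.ext_iff]
    rw [h2] at h1
    exact h1
  have hKtop : K = ⊤ := by
    rcases hS.eq_bot_or_eq_top_of_normal _ hKnormal with h | h
    · exfalso
      have : w ∈ K := hmem
      rw [h, Subgroup.mem_bot] at this
      exact hw this
    · exact h
  ext ⟨s, t⟩
  simp only [Subgroup.mem_top, iff_true]
  have h1 : ((1 : S), s⁻¹ * t) ∈ P := by
    have : s⁻¹ * t ∈ K := by rw [hKtop]; trivial
    exact this
  have h2 : ((s, t) : S × S) = (s, s) * (1, s⁻¹ * t) := by
    simp [Prod.ext_iff]
  rw [h2]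
  exact P.mul_mem (hdiag s) h1

/-- helper: a function vanishing on all `castSucc` coordinates is a `mulSingle` at `last`. -/
lemma supported_last {n : ℕ} (x : Fin (n + 1) → S)
    (h : ∀ i : Fin n, x i.castSucc = 1) :
    x = Pi.mulSingle (Fin.last n) (x (Fin.last n)) := by
  classical
  funext j
  refine Fin.lastCases ?_ ?_ j
  · simp
  · intro i
    rw [h i, Pi.mulSingle_eq_of_ne (Fin.castSucc_lt_last i).ne]

/-- Key generation lemma: a subgroup of `S^n` whose pairwise projections are full
(and single projections surjective) is everything. -/
lemma key_lemma [Finite S] (hS : IsSimpleGroup S)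
    (hna : ∃ a b : S, a * b ≠ b * a) :
    ∀ (n : ℕ) (H : Subgroup (Fin n → S)),
      (∀ (i : Fin n) (s : S), ∃ x ∈ H, x i = s) →
      (∀ i j : Fin n, i ≠ j → ∀ s t : S, ∃ x ∈ H, x i = s ∧ x j = t) →
      H = ⊤ := by
  intro n
  induction n with
  | zero =>
    intro H _ _
    ext x
    simp only [Subgroup.mem_top, iff_true]
    have : x = 1 := Subsingleton.elim x 1
    rw [this]; exact H.one_mem
  | succ n ih =>
    intro H hsingle hpair
    classical
    set π : (Fin (n + 1) → S) →* (Fin n → S) :=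
      Pi.monoidHom (fun i => Pi.evalMonoidHom (fun _ => S) i.castSucc) with hπdef
    have hπ : ∀ (x : Fin (n + 1) → S) (i : Fin n), π x i = x i.castSucc := fun _ _ => rfl
    have hH' : H.map π = ⊤ := by
      apply ih
      · intro i s
        obtain ⟨x, hx, hxi⟩ := hsingle i.castSucc s
        exact ⟨π x, Subgroup.mem_map.mpr ⟨x, hx, rfl⟩, hxi⟩
      · intro i j hij s t
        obtain ⟨x, hx, h1, h2⟩ := hpair i.castSucc j.castSucc
          (by simpa [Fin.castSucc_inj] using hij) s t
        exact ⟨π x, Subgroup.mem_map.mpr ⟨x, hx, rfl⟩, h1, h2⟩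
    have hsurjπ : ∀ y : Fin n → S, ∃ h ∈ H, π h = y := by
      intro y
      have : y ∈ H.map π := by rw [hH']; trivial
      exact Subgroup.mem_map.mp this
    set L : Subgroup S := H.comap (MonoidHom.mulSingle (fun _ => S) (Fin.last n)) with hLdef
    have hconj : ∀ (y : Fin (n + 1) → S) (s : S),
        y * Pi.mulSingle (Fin.last n) s * y⁻¹ =
          Pi.mulSingle (Fin.last n) (y (Fin.last n) * s * (y (Fin.last n))⁻¹) := by
      intro y s
      funext j
      rcases eq_or_ne j (Fin.last n) with rfl | hj
      · simp
      · simp [Pi.mulSingle_eq_of_ne hj]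
    have hLnormal : L.Normal := by
      constructor
      intro s hs g
      obtain ⟨y, hy, hyl⟩ := hsingle (Fin.last n) g
      have h1 : y * Pi.mulSingle (Fin.last n) s * y⁻¹ ∈ H :=
        H.mul_mem (H.mul_mem hy hs) (H.inv_mem hy)
      rw [hconj y s, hyl] at h1
      exact h1
    rcases hS.eq_bot_or_eq_top_of_normal _ hLnormal with hLbot | hLtop
    · -- L = ⊥ : derive a contradiction
      exfalso
      set π' : H →* (Fin n → S) := π.comp H.subtype with hπ'def
      have hinj : Function.Injective π' := by
        intro a b hab
        have hsupp : ∀ i : Fin n, ((a : Fin (n+1) → S) * (b : Fin (n+1) → S)⁻¹) i.castSucc = 1 := by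
          intro i
          have : (a : Fin (n+1) → S) i.castSucc = (b : Fin (n+1) → S) i.castSucc := by
            have := congrFun hab i
            exact this
          simp [Pi.mul_apply, Pi.inv_apply, this]
        have heq := supported_last _ hsupp
        have hmem : ((a : Fin (n+1) → S) * (b : Fin (n+1) → S)⁻¹) (Fin.last n) ∈ L := by
          show Pi.mulSingle (Fin.last n) _ ∈ H
          rw [← heq]
          exact H.mul_mem a.2 (H.inv_mem b.2)
        rw [hLbot, Subgroup.mem_bot] at hmem
        have : (a : Fin (n+1) → S) * (b : Fin (n+1) → S)⁻¹ = 1 := by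
          rw [heq, hmem, Pi.mulSingle_one]
        have : (a : Fin (n+1) → S) = b := by
          have := mul_inv_eq_one.mp this
          exact this
        exact Subtype.ext this
      have hsurj : Function.Surjective π' := by
        intro y
        obtain ⟨h, hh, hph⟩ := hsurjπ y
        exact ⟨⟨h, hh⟩, hph⟩
      set e : H ≃* (Fin n → S) := MulEquiv.ofBijective π' ⟨hinj, hsurj⟩ with hedef
      set φ : (Fin n → S) →* S :=
        ((Pi.evalMonoidHom (fun _ => S) (Fin.last n)).comp H.subtype).comp
          e.symm.toMonoidHom with hφdef
      have hφx : ∀ (x : Fin (n+1) → S) (hx : x ∈ H), φ (π x) = x (Fin.last n) := by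
        intro x hx
        have h1 : π x = e ⟨x, hx⟩ := rfl
        rw [h1]
        show ((e.symm (e ⟨x, hx⟩) : H) : Fin (n+1) → S) (Fin.last n) = _
        rw [e.symm_apply_apply]
      have hφsurj : Function.Surjective φ := by
        intro s
        obtain ⟨x, hx, hxl⟩ := hsingle (Fin.last n) s
        exact ⟨π x, by rw [hφx x hx, hxl]⟩
      obtain ⟨i₀, hi₀⟩ := factor_lemma hS hna φ hφsurj
      obtain ⟨b, hb⟩ := exists_ne (1 : S)
      obtain ⟨x, hx, hx1, hx2⟩ := hpair i₀.castSucc (Fin.last n) (Fin.castSucc_lt_last i₀).ne 1 b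
      have h1 : φ (π x) = 1 := hi₀ (π x) (by rw [hπ x i₀]; exact hx1)
      rw [hφx x hx, hx2] at h1
      exact hb h1
    · -- L = ⊤ : H = ⊤
      ext x
      simp only [Subgroup.mem_top, iff_true]
      obtain ⟨h, hh, hph⟩ := hsurjπ (π x)
      have hsupp : ∀ i : Fin n, (x * h⁻¹) i.castSucc = 1 := by
        intro i
        have : h i.castSucc = x i.castSucc := congrFun hph i
        simp [Pi.mul_apply, Pi.inv_apply, this]
      have heq := supported_last (x * h⁻¹) hsupp
      have hmem : x * h⁻¹ ∈ H := by
        rw [heq]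
        have : (x * h⁻¹) (Fin.last n) ∈ L := by rw [hLtop]; trivial
        exact this
      have := H.mul_mem hmem hh
      rwa [inv_mul_cancel_right] at this

end Aux

/-- **Proposition (Kassabov–Nikolov).**  For a nonabelian finite simple group `S` and
positive integers `c, m` with `m ≤ |Aut(S)|^c`, there exist `c + 1` injective homomorphisms
`f i : S → S^m` whose images together generate `S^m`. -/
theorem exists_embeddings_generating_power
    (S : Type) [Group S] [Finite S] (hS : IsSimpleGroup S)
    (hna : ¬∀ a b : S, a * b = b * a)
    (c m : ℕ) (hc : 0 < c) (hm : 0 < m)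
    (hmc : m ≤ Nat.card (MulAut S) ^ c) :
    ∃ f : Fin (c + 1) → (S →* (Fin m → S)),
      (∀ i, Function.Injective (f i)) ∧ (⨆ i, (f i).range) = ⊤ := by
  classical
  push_neg at hna
  have hfin : Finite (MulAut S) := by
    have : Function.Injective (fun e : MulAut S => (e : S → S)) := fun a b h =>
      MulEquiv.ext (congrFun h)
    exact Finite.of_injective _ this
  haveI := Fintype.ofFinite S
  haveI := Fintype.ofFinite (MulAut S)
  obtain ⟨ι⟩ : Nonempty (Fin m ↪ (Fin c → MulAut S)) := by
    apply Function.Embedding.nonempty_of_card_le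
    calc Fintype.card (Fin m) = m := Fintype.card_fin m
    _ ≤ Nat.card (MulAut S) ^ c := hmc
    _ = Fintype.card (MulAut S) ^ c := by rw [Nat.card_eq_fintype_card]
    _ = Fintype.card (Fin c → MulAut S) := by
        rw [Fintype.card_fun, Fintype.card_fin]
  set α : Fin (c + 1) → Fin m → MulAut S :=
    fun j i => Fin.cases 1 (fun ℓ => ι i ℓ) j with hα
  set f : Fin (c + 1) → (S →* (Fin m → S)) :=
    fun j => Pi.monoidHom (fun i => (α j i).toMonoidHom) with hf
  have hfapp : ∀ (j : Fin (c + 1)) (s : S) (i : Fin m), f j s i = α j i s := fun _ _ _ => rfl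
  have hα0 : ∀ i, α 0 i = 1 := fun i => rfl
  have hαsucc : ∀ (ℓ : Fin c) (i : Fin m), α ℓ.succ i = ι i ℓ := fun ℓ i => by
    simp [hα]
  refine ⟨f, ?_, ?_⟩
  · intro j a b hab
    have i₀ : Fin m := ⟨0, hm⟩
    have := congrFun hab i₀
    rw [hfapp, hfapp] at this
    exact (α j i₀).injective this
  · set H : Subgroup (Fin m → S) := ⨆ j, (f j).range with hH
    have hdiagmem : ∀ u : S, f 0 u ∈ H :=
      fun u => Subgroup.mem_iSup_of_mem 0 ⟨u, rfl⟩
    have hsingle : ∀ (i : Fin m) (s : S), ∃ x ∈ H, x i = s := by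
      intro i s
      refine ⟨f 0 s, hdiagmem s, ?_⟩
      rw [hfapp, hα0]
      rfl
    apply key_lemma hS ⟨_, _, hna.choose_spec.choose_spec⟩ m H hsingle
    intro i j hij s t
    -- find a level where ι i and ι j differ
    have hιne : ι i ≠ ι j := fun h => hij (ι.injective h)
    obtain ⟨ℓ, hℓ⟩ := Function.ne_iff.mp hιne
    obtain ⟨v, hv⟩ : ∃ v : S, ι i ℓ v ≠ ι j ℓ v := by
      by_contra hcon
      push_neg at hcon
      exact hℓ (MulEquiv.ext hcon)
    -- projection to coordinates (i, j)
    set p : (Fin m → S) →* S × S :=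
      (Pi.evalMonoidHom (fun _ => S) i).prod (Pi.evalMonoidHom (fun _ => S) j) with hp
    have hPtop : H.map p = ⊤ := by
      apply prod_top hS
      · intro u
        exact Subgroup.mem_map.mpr ⟨f 0 u, hdiagmem u, by
          show (f 0 u i, f 0 u j) = (u, u)
          rw [hfapp, hfapp, hα0, hα0]; rfl⟩
      · exact fun h => hv (inv_mul_eq_one.mp h)
      · show ((1 : S), (ι i ℓ v)⁻¹ * ι j ℓ v) ∈ H.map p
        refine Subgroup.mem_map.mpr ⟨(f 0 (ι i ℓ v))⁻¹ * f ℓ.succ v, ?_, ?_⟩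
        · exact H.mul_mem (H.inv_mem (hdiagmem _))
            (Subgroup.mem_iSup_of_mem ℓ.succ ⟨v, rfl⟩)
        · refine Prod.ext ?_ ?_
          · show ((f 0 (ι i ℓ v))⁻¹ * f ℓ.succ v) i = (1 : S)
            rw [Pi.mul_apply, Pi.inv_apply, hfapp, hfapp, hα0, hαsucc]
            simp
          · show ((f 0 (ι i ℓ v))⁻¹ * f ℓ.succ v) j = (ι i ℓ v)⁻¹ * ι j ℓ v
            rw [Pi.mul_apply, Pi.inv_apply, hfapp, hfapp, hα0, hαsucc]
            simp
    have : ((s, t) : S × S) ∈ H.map p := by rw [hPtop]; trivial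
    obtain ⟨x, hx, hpx⟩ := Subgroup.mem_map.mp this
    refine ⟨x, hx, ?_, ?_⟩
    · exact congrArg Prod.fst hpx
    · exact congrArg Prod.snd hpx
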